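/- Let X ⊂ ℝ^n and Y ⊂ ℝ^m be nonempty compact convex sets, Z := X × Y, and let f : Z → ℝ be differentiable, convex in its first argument for every fixed second argument and concave in its second argument for every fixed first argument. For z = (x, y) ∈ Z define gap(z) := max_{y'∈Y} f(x, y') − min_{x'∈X} f(x', y) and the gradient mapping ∇±f(z) := (∇_x f(z), −∇_y f(z)) ∈ ℝ^{n+m}. Then for any T ≥ 1, points w^1, …, w^T ∈ Z and weights ρ_1, …, ρ_T > 0, setting Λ := Σ_{t=1}^T ρ_t and w̄ := (1/Λ) Σ_{t=1}^T ρ_t w^t, one has gap(w̄) ≤ sup_{u ∈ Z} (1/Λ) Σ_{t=1}^T ρ_t ⟨∇±f(w^t), w^t − u⟩. -/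

import Mathlib

open RealInnerProductSpace Topology Filter

lemma convex_grad_ineq {E : Type*} [NormedAddCommGroup E] [InnerProductSpace ℝ E] [CompleteSpace E]
    {s : Set E} {f : E → ℝ} {g x u : E}
    (hf : ConvexOn ℝ s f) (hx : x ∈ s) (hu : u ∈ s) (hg : HasGradientAt f g x) :
    f x + ⟪g, u - x⟫ ≤ f u := by
  have hφ : HasDerivAt (fun t : ℝ => x + t • (u - x)) (u - x) 0 := by
    simpa using ((hasDerivAt_id (0:ℝ)).smul_const (u - x)).const_add x
  have hh : HasDerivAt (fun t : ℝ => f (x + t • (u - x))) ⟪g, u - x⟫ 0 := by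
    have hg' : HasFDerivAt f ((InnerProductSpace.toDual ℝ E) g) (x + (0:ℝ) • (u - x)) := by
      simpa using hg.hasFDerivAt
    have := hg'.comp_hasDerivAt 0 hφ
    simp at this; exact this
  have hslope : Filter.Tendsto (slope (fun t : ℝ => f (x + t • (u - x))) 0) (𝓝[>] 0)
      (𝓝 ⟪g, u - x⟫) :=
    (hasDerivAt_iff_tendsto_slope.1 hh).mono_left (nhdsWithin_mono 0 (by
      intro t ht
      exact ne_of_gt ht))
  have key : ⟪g, u - x⟫ ≤ f u - f x := by
    refine le_of_tendsto hslope ?_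
    filter_upwards [Ioc_mem_nhdsGT_of_mem (Set.left_mem_Ico.2 zero_lt_one)] with t ht
    have h1 : f ((1 - t) • x + t • u) ≤ (1 - t) * f x + t * f u :=
      hf.2 hx hu (by linarith [ht.2]) (le_of_lt ht.1) (by ring)
    have h2 : x + t • (u - x) = (1 - t) • x + t • u := by module
    have h3 : slope (fun t : ℝ => f (x + t • (u - x))) 0 t
        = (f (x + t • (u - x)) - f x) / t := by
      simp [slope_def_field]
    rw [h3, h2]
    rw [div_le_iff₀ ht.1]
    simp at h1 ⊢
    nlinarith [h1]
  linarith

lemma concave_grad_ineq {E : Type*} [NormedAddCommGroup E] [InnerProductSpace ℝ E] [CompleteSpace E]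
    {s : Set E} {f : E → ℝ} {g x u : E}
    (hf : ConcaveOn ℝ s f) (hx : x ∈ s) (hu : u ∈ s) (hg : HasGradientAt f g x) :
    f u ≤ f x + ⟪g, u - x⟫ := by
  have hg' : HasGradientAt (fun y => -(f y)) (-g) x := by
    have := hg.hasFDerivAt.neg
    rw [hasFDerivAt_iff_hasGradientAt] at this
    simp at this; exact this
  have := convex_grad_ineq hf.neg hx hu hg'
  simp only [inner_neg_left, Pi.neg_apply] at this
  linarith



/-- For a differentiable convex-concave function `f` on `Z = X × Y` with
`X ⊂ ℝ^n`, `Y ⊂ ℝ^m` nonempty compact convex, the gap of the weighted average iterate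
is bounded by the weighted regret with respect to the gradient mapping
`∇±f(z) = (∇_x f(z), −∇_y f(z))`. -/
theorem stmt0 {n m : ℕ}
    (X : Set (EuclideanSpace ℝ (Fin n))) (Y : Set (EuclideanSpace ℝ (Fin m)))
    (hXne : X.Nonempty) (hXcomp : IsCompact X) (hXconv : Convex ℝ X)
    (hYne : Y.Nonempty) (hYcomp : IsCompact Y) (hYconv : Convex ℝ Y)
    (f : EuclideanSpace ℝ (Fin n) × EuclideanSpace ℝ (Fin m) → ℝ)
    (gx : EuclideanSpace ℝ (Fin n) × EuclideanSpace ℝ (Fin m) → EuclideanSpace ℝ (Fin n))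
    (gy : EuclideanSpace ℝ (Fin n) × EuclideanSpace ℝ (Fin m) → EuclideanSpace ℝ (Fin m))
    (hgx : ∀ z ∈ X ×ˢ Y, HasGradientAt (fun x => f (x, z.2)) (gx z) z.1)
    (hgy : ∀ z ∈ X ×ˢ Y, HasGradientAt (fun y => f (z.1, y)) (gy z) z.2)
    (hconvex : ∀ y ∈ Y, ConvexOn ℝ X (fun x => f (x, y)))
    (hconcave : ∀ x ∈ X, ConcaveOn ℝ Y (fun y => f (x, y)))
    (T : ℕ) (hT : 1 ≤ T)
    (w : Fin T → EuclideanSpace ℝ (Fin n) × EuclideanSpace ℝ (Fin m))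
    (hw : ∀ t, w t ∈ X ×ˢ Y)
    (ρ : Fin T → ℝ) (hρ : ∀ t, 0 < ρ t)
    (Λ : ℝ) (hΛ : Λ = ∑ t, ρ t)
    (wbar : EuclideanSpace ℝ (Fin n) × EuclideanSpace ℝ (Fin m))
    (hwbar : wbar = Λ⁻¹ • ∑ t, ρ t • w t) :
    sSup ((fun y' => f (wbar.1, y')) '' Y) - sInf ((fun x' => f (x', wbar.2)) '' X)
      ≤ sSup ((fun u : EuclideanSpace ℝ (Fin n) × EuclideanSpace ℝ (Fin m) =>
          Λ⁻¹ * ∑ t, ρ t * (⟪gx (w t), (w t).1 - u.1⟫ - ⟪gy (w t), (w t).2 - u.2⟫))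
          '' (X ×ˢ Y)) := by
  have hΛpos : 0 < Λ := by
    rw [hΛ]
    have : Nonempty (Fin T) := Fin.pos_iff_nonempty.1 hT
    exact Finset.sum_pos (fun t _ => hρ t) Finset.univ_nonempty
  set σ : Fin T → ℝ := fun t => Λ⁻¹ * ρ t with hσ
  have hσpos : ∀ t, 0 ≤ σ t := fun t => mul_nonneg (inv_nonneg.2 hΛpos.le) (hρ t).le
  have hσsum : ∑ t, σ t = 1 := by
    rw [hσ]
    simp only
    rw [← Finset.mul_sum, ← hΛ, inv_mul_cancel₀ hΛpos.ne']
  have hwbar1 : wbar.1 = ∑ t, σ t • (w t).1 := by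
    rw [hwbar]
    simp only [Prod.smul_fst, Prod.fst_sum, Finset.smul_sum]
    exact Finset.sum_congr rfl fun t _ => by simp [hσ, smul_smul]
  have hwbar2 : wbar.2 = ∑ t, σ t • (w t).2 := by
    rw [hwbar]
    simp only [Prod.smul_snd, Prod.snd_sum, Finset.smul_sum]
    exact Finset.sum_congr rfl fun t _ => by simp [hσ, smul_smul]
  have hwbarX : wbar.1 ∈ X := by
    rw [hwbar1]
    exact hXconv.sum_mem (fun t _ => hσpos t) hσsum (fun t _ => (hw t).1)
  have hwbarY : wbar.2 ∈ Y := by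
    rw [hwbar2]
    exact hYconv.sum_mem (fun t _ => hσpos t) hσsum (fun t _ => (hw t).2)
  set R : EuclideanSpace ℝ (Fin n) × EuclideanSpace ℝ (Fin m) → ℝ :=
    fun u => Λ⁻¹ * ∑ t, ρ t * (⟪gx (w t), (w t).1 - u.1⟫ - ⟪gy (w t), (w t).2 - u.2⟫) with hR
  -- pointwise inequality
  have key : ∀ u ∈ X ×ˢ Y, f (wbar.1, u.2) - f (u.1, wbar.2) ≤ R u := by
    rintro u ⟨hu1, hu2⟩
    have ha : f (wbar.1, u.2) ≤ ∑ t, σ t * f ((w t).1, u.2) := by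
      have := (hconvex u.2 hu2).map_sum_le (fun t _ => hσpos t) hσsum (fun t _ => (hw t).1)
      rw [← hwbar1] at this
      exact this
    have hd : ∑ t, σ t * f (u.1, (w t).2) ≤ f (u.1, wbar.2) := by
      have := (hconcave u.1 hu1).le_map_sum (fun t _ => hσpos t) hσsum (fun t _ => (hw t).2)
      rw [← hwbar2] at this
      exact this
    have hbc : ∀ t, f ((w t).1, u.2) - f (u.1, (w t).2)
        ≤ ⟪gx (w t), (w t).1 - u.1⟫ - ⟪gy (w t), (w t).2 - u.2⟫ := by
      intro t
      have hb : f ((w t).1, u.2) ≤ f (w t) + ⟪gy (w t), u.2 - (w t).2⟫ := by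
        have := concave_grad_ineq (hconcave (w t).1 (hw t).1) (hw t).2 hu2 (hgy (w t) (hw t))
        simpa using this
      have hc : f (w t) + ⟪gx (w t), u.1 - (w t).1⟫ ≤ f (u.1, (w t).2) := by
        have := convex_grad_ineq (hconvex (w t).2 (hw t).2) (hw t).1 hu1 (hgx (w t) (hw t))
        simpa using this
      have e1 : ⟪gy (w t), u.2 - (w t).2⟫ = -⟪gy (w t), (w t).2 - u.2⟫ := by
        rw [← inner_neg_right]; congr 1; abel
      have e2 : ⟪gx (w t), u.1 - (w t).1⟫ = -⟪gx (w t), (w t).1 - u.1⟫ := by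
        rw [← inner_neg_right]; congr 1; abel
      rw [e1] at hb; rw [e2] at hc
      linarith
    have : f (wbar.1, u.2) - f (u.1, wbar.2)
        ≤ ∑ t, σ t * (⟪gx (w t), (w t).1 - u.1⟫ - ⟪gy (w t), (w t).2 - u.2⟫) := by
      have hsum : ∑ t, σ t * f ((w t).1, u.2) - ∑ t, σ t * f (u.1, (w t).2)
          ≤ ∑ t, σ t * (⟪gx (w t), (w t).1 - u.1⟫ - ⟪gy (w t), (w t).2 - u.2⟫) := by
        rw [← Finset.sum_sub_distrib]
        refine Finset.sum_le_sum fun t _ => ?_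
        rw [← mul_sub]
        exact mul_le_mul_of_nonneg_left (hbc t) (hσpos t)
      linarith
    simp only [hR]
    rw [Finset.mul_sum]
    calc f (wbar.1, u.2) - f (u.1, wbar.2)
        ≤ ∑ t, σ t * (⟪gx (w t), (w t).1 - u.1⟫ - ⟪gy (w t), (w t).2 - u.2⟫) := this
      _ = ∑ t, Λ⁻¹ * (ρ t * (⟪gx (w t), (w t).1 - u.1⟫ - ⟪gy (w t), (w t).2 - u.2⟫)) := by
          exact Finset.sum_congr rfl fun t _ => by rw [hσ]; ring
  -- continuity and extrema
  have hcontY : ContinuousOn (fun y' => f (wbar.1, y')) Y := fun y hy =>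
    ((hgy (wbar.1, y) ⟨hwbarX, hy⟩).hasFDerivAt.differentiableAt.continuousAt).continuousWithinAt
  have hcontX : ContinuousOn (fun x' => f (x', wbar.2)) X := fun x hx =>
    ((hgx (x, wbar.2) ⟨hx, hwbarY⟩).hasFDerivAt.differentiableAt.continuousAt).continuousWithinAt
  obtain ⟨y0, hy0, hy0max⟩ := hYcomp.exists_isMaxOn hYne hcontY
  obtain ⟨x0, hx0, hx0min⟩ := hXcomp.exists_isMinOn hXne hcontX
  have hsup : sSup ((fun y' => f (wbar.1, y')) '' Y) ≤ f (wbar.1, y0) :=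
    csSup_le (hYne.image _) (by rintro a ⟨y, hy, rfl⟩; exact hy0max hy)
  have hinf : f (x0, wbar.2) ≤ sInf ((fun x' => f (x', wbar.2)) '' X) :=
    le_csInf (hXne.image _) (by rintro a ⟨x, hx, rfl⟩; exact hx0min hx)
  have hRcont : Continuous R := by
    rw [hR]
    refine continuous_const.mul (continuous_finset_sum _ fun t _ => continuous_const.mul ?_)
    exact ((continuous_const.inner (continuous_const.sub continuous_fst))).sub
      (continuous_const.inner (continuous_const.sub continuous_snd))
  have hbdd : BddAbove (R '' (X ×ˢ Y)) :=
    ((hXcomp.prod hYcomp).image hRcont).bddAbove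
  have hmem : R (x0, y0) ∈ R '' (X ×ˢ Y) := ⟨(x0, y0), ⟨hx0, hy0⟩, rfl⟩
  calc sSup ((fun y' => f (wbar.1, y')) '' Y) - sInf ((fun x' => f (x', wbar.2)) '' X)
      ≤ f (wbar.1, y0) - f (x0, wbar.2) := by linarith
    _ ≤ R (x0, y0) := key (x0, y0) ⟨hx0, hy0⟩
    _ ≤ sSup (R '' (X ×ˢ Y)) := le_csSup hbdd hmem
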